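/- Let α_i → −∞, let (k_i) and (n_i) be sequences of positive integers satisfying n_{i+1}/z_i ≤ δ where z_i = k_1 + ⋯ + k_i, let M ∈ ℝ and V ≥ 0, and let (S_n) be a real sequence such that for z_i ≤ n ≤ z_i + n_{i+1}: S_n ≤ (α_i + ε)·z_i + M·(n − z_i) + V, and for z_i + n_{i+1} ≤ n ≤ z_{i+1}: S_n ≤ (α_i + δ)·z_i + (n − z_i)(α_{i+1} + δ) + V. Then lim_{n→∞} S_n/n = −∞. -/
import Mathlib


theorem stmt_17 (α : ℕ → ℝ) (k n : ℕ → ℕ) (δ ε M V : ℝ)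
    (hδ : 0 < δ) (hε : 0 < ε) (hV : 0 ≤ V)
    (hk : ∀ i, 0 < k i) (hn : ∀ i, 0 < n i)
    (z : ℕ → ℕ) (hz : ∀ i, z i = ∑ l ∈ Finset.range (i + 1), k l)
    (hratio : ∀ i, (n (i + 1) : ℝ) / (z i : ℝ) ≤ δ)
    (hα : Filter.Tendsto α Filter.atTop Filter.atBot)
    (S : ℕ → ℝ)
    (hS1 : ∀ i m, z i ≤ m → m ≤ z i + n (i + 1) →
      S m ≤ (α i + ε) * (z i : ℝ) + M * ((m : ℝ) - (z i : ℝ)) + V)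
    (hS2 : ∀ i m, z i + n (i + 1) ≤ m → m ≤ z (i + 1) →
      S m ≤ (α i + δ) * (z i : ℝ) + ((m : ℝ) - (z i : ℝ)) * (α (i + 1) + δ) + V) :
    Filter.Tendsto (fun m => S m / (m : ℝ)) Filter.atTop Filter.atBot := by
  have hzk : ∀ i, z (i + 1) = z i + k (i + 1) := by
    intro i; rw [hz, hz, Finset.sum_range_succ]
  have hzpos : ∀ i, 0 < z i := by
    intro i
    induction i with
    | zero => rw [hz]; simpa using hk 0
    | succ j ih => have := hk (j + 1); rw [hzk]; omega
  have hmono : Monotone z := monotone_nat_of_le_succ (fun i => by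
    have := hk (i + 1); rw [hzk i]; omega)
  rw [Filter.tendsto_atBot]
  intro B
  set C : ℝ := min (min ((B - |M| * δ - V) * (1 + δ) - ε) (B - δ - V)) (min (-ε) (-δ))
    with hCdef
  have h1δ : (0:ℝ) < 1 + δ := by linarith
  have hC1 : C + ε ≤ (B - |M| * δ - V) * (1 + δ) := by
    have h : C ≤ (B - |M| * δ - V) * (1 + δ) - ε := by
      rw [hCdef]; exact le_trans (min_le_left _ _) (min_le_left _ _)
    linarith
  have hC2 : C ≤ B - δ - V := by
    rw [hCdef]; exact le_trans (min_le_left _ _) (min_le_right _ _)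
  have hC3 : C + ε ≤ 0 := by
    have h : C ≤ -ε := by
      rw [hCdef]; exact le_trans (min_le_right _ _) (min_le_left _ _)
    linarith
  have hC4 : C + δ ≤ 0 := by
    have h : C ≤ -δ := by
      rw [hCdef]; exact le_trans (min_le_right _ _) (min_le_right _ _)
    linarith
  clear hCdef
  clear_value C
  -- choose I so that α i ≤ C for i ≥ I
  obtain ⟨I, hI⟩ := (hα.eventually (Filter.eventually_le_atBot C)).exists_forall_of_atTop
  -- coverage lemma
  have cover : ∀ m, z I ≤ m → ∃ i, I ≤ i ∧ z i ≤ m ∧ m ≤ z (i + 1) := by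
    intro m hm
    induction m, hm using Nat.le_induction with
    | base => exact ⟨I, le_refl I, le_refl _, hmono (Nat.le_succ I)⟩
    | succ m hm ih =>
      obtain ⟨i, hIi, h1, h2⟩ := ih
      rcases Nat.lt_or_ge m (z (i + 1)) with h | h
      · exact ⟨i, hIi, le_trans h1 (Nat.le_succ m), h⟩
      · have hmz : m = z (i + 1) := le_antisymm h2 h
        have hk2 := hk (i + 2)
        have hz2 := hzk (i + 1)
        refine ⟨i + 1, le_trans hIi (Nat.le_succ i), by omega, ?_⟩
        rw [hzk (i + 1)]
        have hk2' := hk (i + 1 + 1)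
        omega
  refine Filter.eventually_atTop.2 ⟨max (z I) 1, fun m hm => ?_⟩
  obtain ⟨i, hIi, h1, h2⟩ := cover m (le_trans (le_max_left _ _) hm)
  have hm1 : (1:ℝ) ≤ (m:ℝ) := by
    exact_mod_cast le_trans (le_max_right (z I) 1) hm
  have hmpos : (0:ℝ) < (m:ℝ) := by linarith
  rw [div_le_iff₀ hmpos]
  have hZpos : (0:ℝ) < (z i : ℝ) := by exact_mod_cast hzpos i
  have hZm : (z i : ℝ) ≤ (m:ℝ) := by exact_mod_cast h1
  have hαi : α i ≤ C := hI i hIi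
  have hαi1 : α (i + 1) ≤ C := hI (i + 1) (by omega)
  have hnδ : (n (i + 1) : ℝ) ≤ δ * (z i : ℝ) := by
    have := hratio i
    rw [div_le_iff₀ hZpos] at this
    linarith
  rcases le_or_gt m (z i + n (i + 1)) with hcase | hcase
  · -- first regime
    have hS := hS1 i m h1 hcase
    have hmZn : (m:ℝ) ≤ (z i : ℝ) + (n (i + 1) : ℝ) := by exact_mod_cast hcase
    have hmZδ : (m:ℝ) - (z i : ℝ) ≤ δ * (m:ℝ) := by
      nlinarith [mul_le_mul_of_nonneg_left hZm hδ.le]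
    have hMb : M * ((m:ℝ) - (z i : ℝ)) ≤ |M| * δ * (m:ℝ) := by
      have h0 : (0:ℝ) ≤ (m:ℝ) - (z i : ℝ) := by linarith
      nlinarith [mul_le_mul_of_nonneg_right (le_abs_self M) h0,
        mul_le_mul_of_nonneg_left hmZδ (abs_nonneg M)]
    have hkey : (C + ε) * (z i : ℝ) ≤ (B - |M| * δ - V) * (m:ℝ) := by
      rcases le_or_gt 0 (B - |M| * δ - V) with hB | hB
      · have h0 : (C + ε) * (z i : ℝ) ≤ 0 := mul_nonpos_of_nonpos_of_nonneg hC3 hZpos.le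
        have h1 : 0 ≤ (B - |M| * δ - V) * (m:ℝ) := mul_nonneg hB hmpos.le
        linarith
      · have hm1δ : (m:ℝ) ≤ (1 + δ) * (z i : ℝ) := by nlinarith
        have s1 : (C + ε) * (z i : ℝ) ≤ ((B - |M| * δ - V) * (1 + δ)) * (z i : ℝ) :=
          mul_le_mul_of_nonneg_right hC1 hZpos.le
        have s2 : (B - |M| * δ - V) * ((1 + δ) * (z i : ℝ)) ≤ (B - |M| * δ - V) * (m:ℝ) :=
          mul_le_mul_of_nonpos_left hm1δ hB.le
        nlinarith [s1, s2]
    have hαZ : (α i + ε) * (z i : ℝ) ≤ (C + ε) * (z i : ℝ) :=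
      mul_le_mul_of_nonneg_right (by linarith) hZpos.le
    have hVm : V ≤ V * (m:ℝ) := le_mul_of_one_le_right hV hm1
    linarith [hS, hαZ, hMb, hkey, hVm]
  · -- second regime
    have hS := hS2 i m (le_of_lt hcase) h2
    have h1' : (α i + δ) * (z i : ℝ) ≤ (C + δ) * (z i : ℝ) :=
      mul_le_mul_of_nonneg_right (by linarith) hZpos.le
    have hmZ0 : (0:ℝ) ≤ (m:ℝ) - (z i : ℝ) := by linarith
    have h2' : ((m:ℝ) - (z i : ℝ)) * (α (i + 1) + δ) ≤ ((m:ℝ) - (z i : ℝ)) * (C + δ) :=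
      mul_le_mul_of_nonneg_left (by linarith) hmZ0
    have hVm : V ≤ V * (m:ℝ) := le_mul_of_one_le_right hV hm1
    have hfin : (C + δ + V) * (m:ℝ) ≤ B * (m:ℝ) :=
      mul_le_mul_of_nonneg_right (by linarith) hmpos.le
    linarith [hS, h1', h2', hVm, hfin]
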